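/- arXiv:math/0601652 — 3 statements merged into one kernel-verified Lean document; each statement's English description precedes it below -/
import Mathlib

section
/- Let p ∈ (0,1) with p ≠ 1/2 and q = 1 - p. Let X be a Bernoulli(p) random variable (P(X=1)=p, P(X=0)=q) and let Y be a random variable independent of X with finite variance such that X + Y is symmetric around zero (i.e., X+Y and -(X+Y) have the same distribution). Then Var(Y) ≥ p·q. -/
open MeasureTheory ProbabilityTheory

/-- The odd, `1`-antiperiodic test function `w(y) = (-1)^⌊y⌋ (fract y - fract y ^ 2)`. -/
noncomputable def wfun (y : ℝ) : ℝ := (-1 : ℝ) ^ ⌊y⌋ * (Int.fract y - Int.fract y ^ 2)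

lemma wfun_measurable : Measurable wfun := by
  apply Measurable.mul
  · exact (measurable_of_countable (fun n : ℤ => ((-1 : ℝ)) ^ n)).comp Int.measurable_floor
  · exact measurable_fract.sub (measurable_fract.pow_const 2)

lemma neg_one_zpow_abs (n : ℤ) : |(-1 : ℝ) ^ n| = 1 := by
  rcases Int.even_or_odd n with he | ho
  · rw [he.neg_one_zpow]; norm_num
  · rw [ho.neg_one_zpow]; norm_num

lemma wfun_bound (y : ℝ) : |wfun y| ≤ 1 := by
  have hu0 := Int.fract_nonneg y
  have hu1 := (Int.fract_lt_one y).le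
  rw [wfun, abs_mul, neg_one_zpow_abs, one_mul, abs_le]
  constructor <;> nlinarith

lemma wfun_add_one (y : ℝ) : wfun (y + 1) = - wfun y := by
  unfold wfun
  have h1 : Int.fract (y + 1) = Int.fract y := by
    simpa using Int.fract_add_int y 1
  have h2 : ⌊y + (1:ℝ)⌋ = ⌊y⌋ + 1 := by simpa using Int.floor_add_int y 1
  rw [h1, h2, zpow_add_one₀ (by norm_num : (-1:ℝ) ≠ 0)]
  ring

lemma wfun_neg (y : ℝ) : wfun (-y) = - wfun y := by
  unfold wfun
  rcases eq_or_ne (Int.fract y) 0 with h | h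
  · have h' : Int.fract (-y) = 0 := by rw [Int.fract_neg_eq_zero]; exact h
    rw [h, h']; ring
  · rw [Int.fract_neg h]
    have hfl : ⌊-y⌋ = -⌊y⌋ - 1 := by
      have hne : (⌊y⌋ : ℝ) < y := by
        have := Int.fract_nonneg y
        have h2 : (⌊y⌋ : ℝ) ≤ y := Int.floor_le y
        rcases h2.lt_or_eq with h3 | h3
        · exact h3
        · exfalso; apply h; rw [Int.fract, ← h3]; simp
      rw [Int.floor_eq_iff]
      constructor
      · push_cast
        have := Int.lt_floor_add_one y
        linarith
      · push_cast
        linarith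
    rw [hfl, zpow_sub₀ (by norm_num : (-1:ℝ) ≠ 0), zpow_neg]
    have hinv : ((-1:ℝ) ^ ⌊y⌋)⁻¹ = (-1:ℝ) ^ ⌊y⌋ := by
      rcases Int.even_or_odd ⌊y⌋ with he | ho
      · rw [he.neg_one_zpow]; norm_num
      · rw [ho.neg_one_zpow]; norm_num
    rw [hinv]
    ring

lemma wfun_le (y : ℝ) : wfun y ≤ y ^ 2 + y := by
  have hu0 := Int.fract_nonneg y
  have hu1 := (Int.fract_lt_one y).le
  have hy : y = (⌊y⌋ : ℝ) + Int.fract y := by rw [Int.fract]; ring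
  set u := Int.fract y with hu
  set c : ℝ := (⌊y⌋ : ℝ) with hc
  rcases Int.even_or_odd ⌊y⌋ with he | ho
  · have hw : wfun y = u - u ^ 2 := by rw [wfun, he.neg_one_zpow, one_mul]
    rw [hw]
    have hcases : (0:ℝ) ≤ c ∨ c ≤ -2 := by
      obtain ⟨k, hk⟩ := he
      rcases le_or_gt 0 ⌊y⌋ with h | h
      · left; rw [hc]; exact_mod_cast h
      · right
        have h2 : ⌊y⌋ ≤ -2 := by omega
        rw [hc]
        exact_mod_cast h2
    rcases hcases with h | h
    · nlinarith
    · nlinarith [sq_nonneg (1 - u), mul_nonneg (by linarith : (0:ℝ) ≤ -2 - c) (by linarith : (0:ℝ) ≤ 1 - u)]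
  · have hw : wfun y = -(u - u ^ 2) := by rw [wfun, ho.neg_one_zpow]; ring
    rw [hw]
    have hcases : (0:ℝ) ≤ c ∨ c = -1 ∨ c ≤ -2 := by
      rcases le_or_gt 0 ⌊y⌋ with h | h
      · left; rw [hc]; exact_mod_cast h
      · rcases eq_or_lt_of_le (by omega : ⌊y⌋ ≤ -1) with h2 | h2
        · right; left; rw [hc, h2]; norm_num
        · right; right
          have h3 : ⌊y⌋ ≤ -2 := by omega
          rw [hc]
          exact_mod_cast h3
    rcases hcases with h | h | h
    · nlinarith
    · nlinarith [sq_nonneg u]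
    · nlinarith [mul_nonneg (by linarith : (0:ℝ) ≤ -1 - c - u) (by linarith : (0:ℝ) ≤ -c - u)]

/-- **Symmetry resistance of Bernoulli(p), quantitative form.**
If `X` is Bernoulli(`p`) with `p ∈ (0,1)`, `p ≠ 1/2`, and `Y` is independent of `X` with
finite variance such that `X + Y` is symmetric around zero, then `Var(Y) ≥ p·(1-p)`. -/
theorem bernoulli_symmetrizer_variance_ge
    {Ω : Type*} [MeasurableSpace Ω] (μ : Measure Ω) [IsProbabilityMeasure μ]
    (p : ℝ) (hp : p ∈ Set.Ioo (0 : ℝ) 1) (hp_ne : p ≠ 1 / 2)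
    (X Y : Ω → ℝ) (hX : Measurable X) (hY : Measurable Y)
    (hX1 : μ {ω | X ω = 1} = ENNReal.ofReal p)
    (hX0 : μ {ω | X ω = 0} = ENNReal.ofReal (1 - p))
    (hindep : IndepFun X Y μ)
    (hY_L2 : MemLp Y 2 μ)
    (hsymm : μ.map (fun ω => X ω + Y ω) = μ.map (fun ω => -(X ω + Y ω))) :
    variance Y μ ≥ p * (1 - p) := by
  obtain ⟨hp0, hp1'⟩ := hp
  have hA : MeasurableSet {ω | X ω = 1} := hX (measurableSet_singleton 1)
  have hB : MeasurableSet {ω | X ω = 0} := hX (measurableSet_singleton 0)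
  have hdisj : Disjoint {ω | X ω = 1} {ω | X ω = 0} := by
    rw [Set.disjoint_left]
    intro ω h1 h0
    simp only [Set.mem_setOf_eq] at h1 h0
    rw [h1] at h0; norm_num at h0
  have hunion : μ ({ω | X ω = 1} ∪ {ω | X ω = 0}) = 1 := by
    rw [measure_union hdisj hB, hX1, hX0,
      ← ENNReal.ofReal_add hp0.le (by linarith)]
    norm_num
  have hae : ∀ᵐ ω ∂μ, X ω = 1 ∨ X ω = 0 := by
    rw [ae_iff]
    have hset : {ω | ¬(X ω = 1 ∨ X ω = 0)} = ({ω | X ω = 1} ∪ {ω | X ω = 0})ᶜ := by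
      ext ω; simp [Set.mem_union, not_or]
    rw [hset, measure_compl (hA.union hB) (measure_ne_top _ _), hunion, measure_univ]
    simp
  have hXint : Integrable X μ := by
    refine ⟨hX.aestronglyMeasurable, HasFiniteIntegral.of_bounded (C := 1) ?_⟩
    filter_upwards [hae] with ω h
    rcases h with h | h <;> simp [h]
  have hYint : Integrable Y μ := hY_L2.integrable one_le_two
  have hZmeas : Measurable (fun ω => X ω + Y ω) := hX.add hY
  have hZint : Integrable (fun ω => X ω + Y ω) μ := hXint.add hYint
  -- mean of X
  have hEX : ∫ ω, X ω ∂μ = p := by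
    have hXind : X =ᵐ[μ] Set.indicator {ω | X ω = 1} (fun _ => (1:ℝ)) := by
      filter_upwards [hae] with ω h
      rcases h with h | h
      · rw [Set.indicator_of_mem (by exact h) (fun _ => (1:ℝ)), h]
      · rw [Set.indicator_of_notMem (by simp [h]) (fun _ => (1:ℝ)), h]
    rw [integral_congr_ae hXind, integral_indicator_const _ hA, measureReal_def, hX1,
      ENNReal.toReal_ofReal hp0.le, smul_eq_mul, mul_one]
  -- symmetry gives mean of Z is 0
  have hEZ : ∫ ω, X ω + Y ω ∂μ = 0 := by
    have h1 : ∫ ω, X ω + Y ω ∂μ = ∫ z, z ∂(μ.map (fun ω => X ω + Y ω)) :=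
      (integral_map hZmeas.aemeasurable aestronglyMeasurable_id).symm
    have h2 : ∫ z, z ∂(μ.map (fun ω => -(X ω + Y ω))) = ∫ ω, -(X ω + Y ω) ∂μ :=
      integral_map hZmeas.neg.aemeasurable aestronglyMeasurable_id
    rw [hsymm, h2, integral_neg] at h1
    linarith
  have hEY : ∫ ω, Y ω ∂μ = -p := by
    rw [integral_add hXint hYint, hEX] at hEZ
    linarith
  -- symmetry gives E[wfun Z] = 0
  have hWYint : Integrable (fun ω => wfun (Y ω)) μ := by
    refine ⟨(wfun_measurable.comp hY).aestronglyMeasurable,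
      HasFiniteIntegral.of_bounded (C := 1) (ae_of_all _ fun ω => ?_)⟩
    simpa using wfun_bound (Y ω)
  have hEWZ : ∫ ω, wfun (X ω + Y ω) ∂μ = 0 := by
    have h1 : ∫ ω, wfun (X ω + Y ω) ∂μ = ∫ z, wfun z ∂(μ.map (fun ω => X ω + Y ω)) :=
      (integral_map hZmeas.aemeasurable wfun_measurable.aestronglyMeasurable).symm
    have h2 : ∫ z, wfun z ∂(μ.map (fun ω => -(X ω + Y ω))) = ∫ ω, wfun (-(X ω + Y ω)) ∂μ :=
      integral_map hZmeas.neg.aemeasurable wfun_measurable.aestronglyMeasurable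
    have h3 : ∫ ω, wfun (-(X ω + Y ω)) ∂μ = - ∫ ω, wfun (X ω + Y ω) ∂μ := by
      rw [← integral_neg]
      exact integral_congr_ae (ae_of_all _ fun ω => wfun_neg _)
    rw [hsymm, h2, h3] at h1
    linarith
  -- decompose wfun Z a.e.
  have hdecomp : (fun ω => wfun (X ω + Y ω)) =ᵐ[μ]
      fun ω => (1 - 2 * X ω) * wfun (Y ω) := by
    filter_upwards [hae] with ω h
    rcases h with h | h
    · rw [h, add_comm, wfun_add_one]; ring
    · rw [h, zero_add]; ring
  -- independence
  have hindep' : IndepFun (fun ω => 1 - 2 * X ω) (fun ω => wfun (Y ω)) μ :=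
    hindep.comp (measurable_const.sub (measurable_const.mul measurable_id))
      wfun_measurable
  have hXint' : Integrable (fun ω => 1 - 2 * X ω) μ :=
    (integrable_const (1:ℝ)).sub (hXint.const_mul 2)
  have hprod : ∫ ω, (1 - 2 * X ω) * wfun (Y ω) ∂μ
      = (∫ ω, 1 - 2 * X ω ∂μ) * ∫ ω, wfun (Y ω) ∂μ := by
    have := hindep'.integral_mul_eq_mul_integral hXint'.aestronglyMeasurable hWYint.aestronglyMeasurable
    simpa [Pi.mul_apply] using this
  have hE1 : ∫ ω, 1 - 2 * X ω ∂μ = 1 - 2 * p := by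
    rw [integral_sub (integrable_const _) (hXint.const_mul 2), integral_const,
      integral_const_mul, hEX]
    simp
  have hEWY : ∫ ω, wfun (Y ω) ∂μ = 0 := by
    rw [integral_congr_ae hdecomp, hprod, hE1] at hEWZ
    have hne : 1 - 2 * p ≠ 0 := by
      intro h; apply hp_ne; linarith
    exact (mul_eq_zero.mp hEWZ).resolve_left hne
  -- final comparison
  have hY2int : Integrable (fun ω => Y ω ^ 2) μ := hY_L2.integrable_sq
  have hmono : ∫ ω, wfun (Y ω) ∂μ ≤ ∫ ω, Y ω ^ 2 + Y ω ∂μ :=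
    integral_mono hWYint (hY2int.add hYint) fun ω => wfun_le (Y ω)
  rw [hEWY, integral_add hY2int hYint, hEY] at hmono
  have hvar : variance Y μ = (∫ ω, Y ω ^ 2 ∂μ) - (∫ ω, Y ω ∂μ) ^ 2 := by
    rw [variance_eq_sub hY_L2]
    rfl
  rw [hvar, hEY]
  nlinarith
end

section
/- Let p ∈ (0,1) with p ≠ 1/2 and let X be a Bernoulli(p) random variable. Then X is symmetry resistant: for every random variable Y independent of X with finite variance such that X + Y is symmetric around zero, one has Var(Y) ≥ Var(X). -/
open MeasureTheory ProbabilityTheory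

set_option linter.unusedSectionVars false
noncomputable section
namespace BernSym

def v (p y : ℝ) : ℝ :=
  y^2 - (2*p-1)*y - 2*p*(1-p) +
    (-((1-p)/p))^(⌊y⌋.toNat) *
      ((2*(1-p)/(2*p-1)) * ((Int.fract y)^2 - 2*p*(Int.fract y) + p*(2*p-1)))

lemma measurable_v (p : ℝ) : Measurable (v p) := by
  unfold v
  have hnat : Measurable fun y : ℝ => ⌊y⌋.toNat := by
    exact (measurable_from_top : Measurable Int.toNat).comp (Int.measurable_floor : Measurable (Int.floor : ℝ → ℤ))
  have h1 : Measurable fun y : ℝ => (-((1-p)/p))^(⌊y⌋.toNat) :=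
    Measurable.pow measurable_const hnat
  have h2 : Measurable (Int.fract : ℝ → ℝ) := measurable_fract
  fun_prop


section Fixed
variable {p : ℝ} (hp : 1/2 < p) (hp1 : p < 1)
include hp hp1

lemma hp0 : 0 < p := lt_trans (by norm_num) hp
lemma hd0 : 0 < 2*p - 1 := by linarith

lemma v_zero : v p 0 = 0 := by
  have h0 : ⌊(0:ℝ)⌋ = 0 := by norm_num
  have hf : Int.fract (0:ℝ) = 0 := by norm_num
  unfold v
  rw [h0, hf]
  have : p ≠ 0 := by positivity
  have : 2*p - 1 ≠ 0 := by nlinarith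
  norm_num
  field_simp
  ring

lemma v_unit {t : ℝ} (h0 : 0 ≤ t) (h1 : t < 1) :
    v p t = -(t*(1-t))/(2*p-1) := by
  have hf : Int.fract t = t := Int.fract_eq_self.mpr ⟨h0, h1⟩
  have hfl : ⌊t⌋ = 0 := Int.floor_eq_zero_iff.mpr ⟨h0, h1⟩
  unfold v
  rw [hf, hfl]
  have hpne : p ≠ 0 := by nlinarith
  have hdne : 2*p - 1 ≠ 0 := by nlinarith
  norm_num
  field_simp
  ring

lemma v_one : v p 1 = 0 := by
  have hf : Int.fract (1:ℝ) = 0 := by norm_num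
  have hfl : ⌊(1:ℝ)⌋ = 1 := by norm_num
  unfold v
  rw [hf, hfl]
  have hpne : p ≠ 0 := by nlinarith
  have hdne : 2*p - 1 ≠ 0 := by nlinarith
  norm_num
  field_simp
  ring

lemma v_rec {y : ℝ} (hy : 0 ≤ y) :
    p * v p (y+1) + (1-p) * v p y = y*(y+1) := by
  have hfl : ⌊y+1⌋ = ⌊y⌋ + 1 := by
    exact_mod_cast Int.floor_add_intCast y 1
  have hnn : 0 ≤ ⌊y⌋ := Int.floor_nonneg.mpr hy
  have htn : (⌊y⌋ + 1).toNat = ⌊y⌋.toNat + 1 := by omega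
  have hf : Int.fract (y+1) = Int.fract y := by
    exact_mod_cast Int.fract_add_intCast y 1
  unfold v
  rw [hfl, htn, hf, pow_succ]
  have hpne : p ≠ 0 := by nlinarith
  have hdne : 2*p - 1 ≠ 0 := by nlinarith
  rw [neg_div', div_pow, div_pow]
  field_simp
  ring


lemma v_sum_nonneg {x : ℝ} (hx : 0 ≤ x) : 0 ≤ v p x + v p (x+1) := by
  have hpne : p ≠ 0 := by nlinarith
  have hdne : 2*p - 1 ≠ 0 := by nlinarith
  have hnn : 0 ≤ ⌊x⌋ := Int.floor_nonneg.mpr hx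
  have hfl : ⌊x+1⌋ = ⌊x⌋ + 1 := by exact_mod_cast Int.floor_add_intCast x 1
  have htn : (⌊x⌋ + 1).toNat = ⌊x⌋.toNat + 1 := by omega
  have hf : Int.fract (x+1) = Int.fract x := by exact_mod_cast Int.fract_add_intCast x 1
  rcases eq_or_lt_of_le hnn with h0 | h1
  · -- ⌊x⌋ = 0 : the sum is 2x²/p
    have hfx : Int.fract x = x := by
      have := (Int.floor_eq_zero_iff.mp h0.symm)
      exact Int.fract_eq_self.mpr ⟨this.1, this.2⟩
    have hkey : v p x + v p (x+1) = 2*x^2/p := by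
      unfold v
      rw [hfl, htn, hf, pow_succ, ← h0, hfx]
      norm_num
      field_simp
      ring
    rw [hkey]; positivity
  · -- ⌊x⌋ ≥ 1
    have hx1 : (1:ℝ) ≤ x := by
      have := Int.le_floor.mp h1
      exact_mod_cast le_trans (by exact_mod_cast h1) (Int.floor_le x)
    set N := ⌊x⌋.toNat with hN
    have hN1 : 1 ≤ N := by omega
    set t := Int.fract x with ht
    have ht0 : 0 ≤ t := Int.fract_nonneg x
    have ht1 : t < 1 := Int.fract_lt_one x
    have hkey : v p x + v p (x+1)
        = 2*x^2 + 4*(1-p)*x - 2*(1-p)*(2*p-1)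
          + (-((1-p)/p))^N * ((2*(1-p)/p) * (t^2 - 2*p*t + p*(2*p-1))) := by
      unfold v
      rw [hfl, htn, hf, pow_succ, ← hN, ← ht]
      simp only [neg_div', div_pow]
      field_simp
      ring
    rw [hkey]
    have hg : |t^2 - 2*p*t + p*(2*p-1)| ≤ 1 := by
      rw [abs_le]; constructor <;> nlinarith
    have hq0 : (0:ℝ) ≤ (1-p)/p := div_nonneg (by linarith) (by linarith)
    have hq1 : (1-p)/p ≤ 1 := by rw [div_le_one (by linarith)]; linarith
    have hr : |(-((1-p)/p))^N| ≤ (1-p)/p := by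
      rw [abs_pow, abs_neg, abs_of_nonneg hq0]
      calc ((1-p)/p)^N ≤ ((1-p)/p)^1 := pow_le_pow_of_le_one hq0 hq1 hN1
        _ = (1-p)/p := pow_one _
    have hc0 : (0:ℝ) ≤ 2*(1-p)/p := div_nonneg (by linarith) (by linarith)
    have habs : |(-((1-p)/p))^N * ((2*(1-p)/p) * (t^2 - 2*p*t + p*(2*p-1)))|
        ≤ ((1-p)/p) * ((2*(1-p)/p) * 1) := by
      rw [abs_mul, abs_mul]
      apply mul_le_mul hr ?_ (by positivity) hq0
      rw [abs_of_nonneg hc0]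
      exact mul_le_mul_of_nonneg_left hg hc0
    have hlow := neg_le_of_abs_le habs
    have hq : (1-p)/p * ((2*(1-p)/p) * 1) ≤ 2 := by
      have h2 : 2*(1-p)/p ≤ 2 := by
        rw [div_le_iff₀ (by linarith)]; linarith
      nlinarith
    nlinarith


lemma v_bound {y : ℝ} (hy : 0 ≤ y) :
    |v p y| ≤ (3 + 8/(2*p-1)) * (1 + y^2) := by
  have hpne : (0:ℝ) < p := by linarith
  have hd : (0:ℝ) < 2*p-1 := by linarith
  set t := Int.fract y with ht
  have ht0 : 0 ≤ t := Int.fract_nonneg y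
  have ht1 : t < 1 := Int.fract_lt_one y
  have hg : |t^2 - 2*p*t + p*(2*p-1)| ≤ 4 := by
    rw [abs_le]; constructor <;> nlinarith
  have hq0 : (0:ℝ) ≤ (1-p)/p := div_nonneg (by linarith) (by linarith)
  have hq1 : (1-p)/p ≤ 1 := by rw [div_le_one (by linarith)]; linarith
  have hr : |(-((1-p)/p))^(⌊y⌋.toNat)| ≤ 1 := by
    rw [abs_pow, abs_neg, abs_of_nonneg hq0]
    exact pow_le_one₀ hq0 hq1
  have hc0 : (0:ℝ) ≤ 2*(1-p)/(2*p-1) := div_nonneg (by linarith) (by linarith)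
  have habs : |(-((1-p)/p))^(⌊y⌋.toNat) * ((2*(1-p)/(2*p-1)) * (t^2 - 2*p*t + p*(2*p-1)))|
      ≤ 1 * ((2*(1-p)/(2*p-1)) * 4) := by
    rw [abs_mul, abs_mul]
    apply mul_le_mul hr ?_ (by positivity) (by norm_num)
    rw [abs_of_nonneg hc0]
    exact mul_le_mul_of_nonneg_left hg hc0
  have hterm : 1 * ((2*(1-p)/(2*p-1)) * 4) ≤ 8/(2*p-1) := by
    rw [one_mul]
    rw [div_mul_eq_mul_div, div_le_div_iff₀ hd hd]
    nlinarith
  have h1 := neg_le_of_abs_le habs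
  have h2 := le_of_abs_le habs
  unfold v
  rw [← ht, abs_le]
  have hd8 : (0:ℝ) < 8/(2*p-1) := by positivity
  constructor <;> nlinarith [sq_nonneg y, sq_nonneg (y-1)]

end Fixed

/-- The dual certificate for `1/2 < p < 1`: odd extension of `v`. -/
def u (p y : ℝ) : ℝ := if 0 ≤ y then v p y else -v p (-y)

section Fixed2
variable {p : ℝ} (hp : 1/2 < p) (hp1 : p < 1)
include hp hp1

lemma u_neg (y : ℝ) : u p (-y) = -u p y := by
  rcases lt_trichotomy y 0 with h | h | h
  · have : ¬ (0 ≤ y) := not_le.mpr h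
    simp only [u, if_pos (by linarith : (0:ℝ) ≤ -y), if_neg this, neg_neg]
  · subst h; simp [u, v_zero hp hp1]
  · have : ¬ (0 ≤ -y) := by push_neg; linarith
    simp only [u, if_neg this, if_pos h.le, neg_neg]

lemma measurable_u : Measurable (u p) := by
  unfold u
  exact Measurable.ite (measurableSet_le measurable_const measurable_id)
    (measurable_v p) (((measurable_v p).comp measurable_neg).neg)

lemma u_bound (y : ℝ) : |u p y| ≤ (3 + 8/(2*p-1)) * (1 + y^2) := by
  unfold u
  split_ifs with h
  · exact v_bound hp hp1 h
  · rw [abs_neg]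
    have := v_bound hp hp1 (by linarith : (0:ℝ) ≤ -y)
    simpa using this

/-- The master pointwise inequality. -/
lemma key_ineq (y : ℝ) : p * u p (y+1) + (1-p) * u p y ≤ y*(y+1) := by
  rcases le_or_gt 0 y with hy | hy
  · have h1 : u p (y+1) = v p (y+1) := if_pos (by linarith)
    have h2 : u p y = v p y := if_pos hy
    rw [h1, h2, v_rec hp hp1 hy]
  rcases le_or_gt (-1) y with hy1 | hy1
  · -- -1 ≤ y < 0
    have h1 : u p (y+1) = v p (y+1) := if_pos (by linarith)
    have h2 : u p y = -v p (-y) := if_neg (not_le.mpr hy)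
    rcases eq_or_lt_of_le hy1 with he | hlt
    · rw [h1, h2, ← he]
      norm_num [v_one hp hp1, v_zero hp hp1]
    · have hv1 : v p (y+1) = -((y+1)*(1-(y+1)))/(2*p-1) :=
        v_unit hp hp1 (by linarith) (by linarith)
      have hv2 : v p (-y) = -((-y)*(1-(-y)))/(2*p-1) :=
        v_unit hp hp1 (by linarith) (by linarith)
      rw [h1, h2, hv1, hv2]
      have hd : (2*p-1) ≠ 0 := by nlinarith
      field_simp
      rw [div_le_iff₀ (by linarith : (0:ℝ) < p*2-1)]
      ring_nf
      nlinarith [sq_nonneg y]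
  · -- y < -1
    set x := -y - 1 with hx
    have hx0 : 0 < x := by simp [hx]; linarith
    have h1 : u p (y+1) = -v p x := by
      have : ¬ (0 ≤ y + 1) := by push_neg; linarith
      simp only [u, if_neg this]
      norm_num [hx]
      ring_nf
    have h2 : u p y = -v p (x+1) := by
      have : ¬ (0 ≤ y) := by push_neg; linarith
      simp only [u, if_neg this]
      congr 1
      rw [hx]; ring
    have hrec := v_rec hp hp1 hx0.le
    have hsum := v_sum_nonneg hp hp1 hx0.le
    have hxy : y*(y+1) = x*(x+1) := by rw [hx]; ring
    rw [h1, h2, hxy]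
    nlinarith

end Fixed2

/-- Existence of a dual certificate for any `p ∈ (0,1)`, `p ≠ 1/2`. -/
lemma exists_certificate {p : ℝ} (hp : p ∈ Set.Ioo (0:ℝ) 1) (hne : p ≠ 1/2) :
    ∃ (U : ℝ → ℝ) (C : ℝ), Measurable U ∧ (∀ y, U (-y) = -U y) ∧
      (∀ y, |U y| ≤ C * (1 + y^2)) ∧
      (∀ y, p * U (y+1) + (1-p) * U y ≤ y*(y+1)) := by
  obtain ⟨hp0, hp1⟩ := hp
  rcases lt_or_gt_of_ne hne with hlt | hgt
  · -- p < 1/2 : use the reflected certificate for 1-p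
    have h1 : 1/2 < 1 - p := by linarith
    have h2 : 1 - p < 1 := by linarith
    refine ⟨fun y => -u (1-p) y, 3 + 8/(2*(1-p)-1), (measurable_u h1 h2).neg,
      fun y => by show -u (1-p) (-y) = -(-u (1-p) y); rw [u_neg h1 h2, neg_neg], fun y => ?_, fun y => ?_⟩
    · rw [abs_neg]; exact u_bound h1 h2 y
    · have hk := key_ineq h1 h2 (-y-1)
      have e1 : -y - 1 + 1 = -y := by ring
      rw [e1, u_neg h1 h2] at hk
      have e2 : u (1-p) (-y-1) = -u (1-p) (y+1) := by
        have : -y-1 = -(y+1) := by ring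
        rw [this, u_neg h1 h2]
      rw [e2] at hk
      show p * (-u (1-p) (y+1)) + (1-p) * (-u (1-p) y) ≤ y*(y+1)
      nlinarith [hk]
  · -- p > 1/2
    exact ⟨u p, 3 + 8/(2*p-1), measurable_u hgt hp1, u_neg hgt hp1,
      u_bound hgt hp1, key_ineq hgt hp1⟩

end BernSym


end

/-- **Bernoulli(p) is symmetry resistant for `p ≠ 1/2`.**
Every symmetrizer `Y` of a Bernoulli(`p`) random variable `X` (i.e. `Y` independent of `X`,
with finite variance, such that `X + Y` is symmetric around zero) satisfies
`Var(Y) ≥ Var(X)`. -/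
theorem bernoulli_symmetry_resistant
    {Ω : Type*} [MeasurableSpace Ω] (μ : Measure Ω) [IsProbabilityMeasure μ]
    (p : ℝ) (hp : p ∈ Set.Ioo (0 : ℝ) 1) (hp_ne : p ≠ 1 / 2)
    (X : Ω → ℝ) (hX : Measurable X)
    (hX1 : μ {ω | X ω = 1} = ENNReal.ofReal p)
    (hX0 : μ {ω | X ω = 0} = ENNReal.ofReal (1 - p)) :
    ∀ Y : Ω → ℝ, Measurable Y → IndepFun X Y μ → MemLp Y 2 μ →
      μ.map (fun ω => X ω + Y ω) = μ.map (fun ω => -(X ω + Y ω)) →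
      variance Y μ ≥ variance X μ := by
  intro Y hY hindep hY2 hmap
  obtain ⟨U, C, hUm, hUodd, hUbd, hUkey⟩ := BernSym.exists_certificate hp hp_ne
  set A := {ω | X ω = 1} with hAdef
  set B := {ω | X ω = 0} with hBdef
  have hA : MeasurableSet A := hX (measurableSet_singleton 1)
  have hB : MeasurableSet B := hX (measurableSet_singleton 0)
  -- X takes values in {0,1} a.e.
  have hdisj : Disjoint A B := by
    rw [Set.disjoint_left]
    intro ω h1 h0
    rw [hAdef, Set.mem_setOf_eq] at h1
    rw [hBdef, Set.mem_setOf_eq] at h0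
    rw [h1] at h0; norm_num at h0
  have hABone : μ (A ∪ B) = 1 := by
    rw [measure_union hdisj hB, hX1, hX0,
      ← ENNReal.ofReal_add hp.1.le (by linarith [hp.2])]
    norm_num
  have hae : ∀ᵐ ω ∂μ, X ω = 1 ∨ X ω = 0 := by
    have hcompl : μ (A ∪ B)ᶜ = 0 := by
      rw [measure_compl (hA.union hB) (measure_ne_top μ _), hABone, measure_univ,
        tsub_self]
    rw [ae_iff]
    have hset : {ω | ¬(X ω = 1 ∨ X ω = 0)} = (A ∪ B)ᶜ := by
      ext ω
      simp [hAdef, hBdef, Set.mem_setOf_eq, not_or]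
    rw [hset]
    exact hcompl
  -- integrability facts
  have hYint : Integrable Y μ := hY2.integrable one_le_two
  have hYsq : Integrable (fun ω => (Y ω)^2) μ := by
    have := hY2.integrable_sq
    simpa [sq] using this
  have hX2 : MemLp X 2 μ := by
    refine MemLp.of_bound hX.aestronglyMeasurable 1 ?_
    filter_upwards [hae] with ω h
    rcases h with h | h <;> simp [h]
  have hXint : Integrable X μ := hX2.integrable one_le_two
  set Z := fun ω => X ω + Y ω with hZdef
  have hZm : Measurable Z := hX.add hY
  have hZ2 : MemLp Z 2 μ := hX2.add hY2
  have hZint : Integrable Z μ := hZ2.integrable one_le_two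
  have hZsq : Integrable (fun ω => (Z ω)^2) μ := by
    have := hZ2.integrable_sq
    simpa [sq] using this
  have hCnn : 0 ≤ C := by
    have := hUbd 0
    nlinarith [abs_nonneg (U 0)]
  -- integrability of U compositions
  have int_dom : Integrable (fun ω => C * (1 + (Y ω)^2)) μ :=
    ((integrable_const (1:ℝ)).add hYsq).const_mul C
  have int_uY : Integrable (fun ω => U (Y ω)) μ := by
    refine Integrable.mono' int_dom ((hUm.comp hY).aestronglyMeasurable) ?_
    refine ae_of_all _ fun ω => ?_
    rw [Real.norm_eq_abs]
    exact hUbd (Y ω)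
  have hY12 : MemLp (fun ω => Y ω + 1) 2 μ := hY2.add (memLp_const 1)
  have hY1sq : Integrable (fun ω => (Y ω + 1)^2) μ := by
    have := hY12.integrable_sq
    simpa [sq] using this
  have int_dom1 : Integrable (fun ω => C * (1 + (Y ω + 1)^2)) μ :=
    ((integrable_const (1:ℝ)).add hY1sq).const_mul C
  have int_uY1 : Integrable (fun ω => U (Y ω + 1)) μ := by
    refine Integrable.mono' int_dom1
      ((hUm.comp (hY.add_const 1)).aestronglyMeasurable) ?_
    refine ae_of_all _ fun ω => ?_
    rw [Real.norm_eq_abs]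
    exact hUbd (Y ω + 1)
  have int_domZ : Integrable (fun ω => C * (1 + (Z ω)^2)) μ :=
    ((integrable_const (1:ℝ)).add hZsq).const_mul C
  have int_uZ : Integrable (fun ω => U (Z ω)) μ := by
    refine Integrable.mono' int_domZ ((hUm.comp hZm).aestronglyMeasurable) ?_
    refine ae_of_all _ fun ω => ?_
    rw [Real.norm_eq_abs]
    exact hUbd (Z ω)
  -- E[U(Z)] = 0 by symmetry and oddness
  have hEUZ : ∫ ω, U (Z ω) ∂μ = 0 := by
    have h1 : ∫ ω, U (Z ω) ∂μ = ∫ z, U z ∂(μ.map Z) :=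
      (integral_map hZm.aemeasurable hUm.aestronglyMeasurable).symm
    have h3 : ∫ z, U z ∂(μ.map (fun ω => -(X ω + Y ω))) = ∫ ω, U (-(X ω + Y ω)) ∂μ :=
      integral_map ((hX.add hY).neg.aemeasurable) hUm.aestronglyMeasurable
    have h4 : ∫ ω, U (-(X ω + Y ω)) ∂μ = - ∫ ω, U (Z ω) ∂μ := by
      rw [← integral_neg]
      congr 1
      funext ω
      exact hUodd (Z ω)
    have h5 : ∫ ω, U (Z ω) ∂μ = - ∫ ω, U (Z ω) ∂μ := by
      calc ∫ ω, U (Z ω) ∂μ = ∫ z, U z ∂(μ.map Z) := h1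
        _ = ∫ z, U z ∂(μ.map (fun ω => -(X ω + Y ω))) := by rw [hmap]
        _ = ∫ ω, U (-(X ω + Y ω)) ∂μ := h3
        _ = - ∫ ω, U (Z ω) ∂μ := h4
    linarith
  -- E[Z] = 0
  have hEZ : ∫ ω, Z ω ∂μ = 0 := by
    have h1 : ∫ ω, Z ω ∂μ = ∫ z, z ∂(μ.map Z) :=
      (integral_map hZm.aemeasurable aestronglyMeasurable_id).symm
    have h3 : ∫ z, z ∂(μ.map (fun ω => -(X ω + Y ω))) = ∫ ω, -(X ω + Y ω) ∂μ :=
      integral_map ((hX.add hY).neg.aemeasurable) aestronglyMeasurable_id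
    have h4 : ∫ ω, -(X ω + Y ω) ∂μ = - ∫ ω, Z ω ∂μ := by
      rw [← integral_neg]
    have h5 : ∫ ω, Z ω ∂μ = - ∫ ω, Z ω ∂μ := by
      calc ∫ ω, Z ω ∂μ = ∫ z, z ∂(μ.map Z) := h1
        _ = ∫ z, z ∂(μ.map (fun ω => -(X ω + Y ω))) := by rw [hmap]
        _ = ∫ ω, -(X ω + Y ω) ∂μ := h3
        _ = - ∫ ω, Z ω ∂μ := h4
    linarith
  -- E[X] = p, E[X²] = p
  have hind1 : (fun ω => A.indicator (fun _ => (1:ℝ)) ω) = fun ω => if X ω = 1 then (1:ℝ) else 0 := by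
    funext ω
    simp [Set.indicator_apply, hAdef, Set.mem_setOf_eq]
  have hEind : ∫ ω, (if X ω = 1 then (1:ℝ) else 0) ∂μ = p := by
    rw [← hind1, integral_indicator_const (1:ℝ) hA, measureReal_def, hX1, smul_eq_mul, mul_one,
      ENNReal.toReal_ofReal hp.1.le]
  have hEX : ∫ ω, X ω ∂μ = p := by
    rw [← hEind]
    refine integral_congr_ae ?_
    filter_upwards [hae] with ω h
    rcases h with h | h <;> simp [h]
  have hEXsq : ∫ ω, (X ω)^2 ∂μ = p := by
    rw [← hEind]
    refine integral_congr_ae ?_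
    filter_upwards [hae] with ω h
    rcases h with h | h <;> simp [h]
  -- E[Y] = -p
  have hEY : ∫ ω, Y ω ∂μ = -p := by
    have := integral_add hXint hYint
    have h2 : ∫ ω, Z ω ∂μ = (∫ ω, X ω ∂μ) + ∫ ω, Y ω ∂μ := by
      rw [hZdef]; exact integral_add hXint hYint
    rw [hEZ, hEX] at h2
    linarith
  -- split E[U(Z)] using independence
  set f1 : ℝ → ℝ := fun x => if x = 1 then (1:ℝ) else 0 with hf1def
  set f0 : ℝ → ℝ := fun x => if x = 0 then (1:ℝ) else 0 with hf0def
  have hf1m : Measurable f1 := by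
    apply Measurable.ite _ measurable_const measurable_const
    exact measurableSet_eq
  have hf0m : Measurable f0 := by
    apply Measurable.ite _ measurable_const measurable_const
    exact measurableSet_eq
  have hsplit : (fun ω => U (Z ω)) =ᵐ[μ]
      fun ω => f1 (X ω) * U (Y ω + 1) + f0 (X ω) * U (Y ω) := by
    filter_upwards [hae] with ω h
    rcases h with h | h
    · simp only [hZdef, hf1def, hf0def, h]
      norm_num [add_comm]
    · simp only [hZdef, hf1def, hf0def, h]
      norm_num
  have hI1 : IndepFun (fun ω => f1 (X ω)) (fun ω => U (Y ω + 1)) μ :=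
    hindep.comp hf1m (hUm.comp (measurable_id.add_const 1))
  have hI0 : IndepFun (fun ω => f0 (X ω)) (fun ω => U (Y ω)) μ :=
    hindep.comp hf0m hUm
  have hEf1 : ∫ ω, f1 (X ω) ∂μ = p := hEind
  have hind0 : (fun ω => B.indicator (fun _ => (1:ℝ)) ω) = fun ω => f0 (X ω) := by
    funext ω
    simp [Set.indicator_apply, hBdef, Set.mem_setOf_eq, hf0def]
  have hEf0 : ∫ ω, f0 (X ω) ∂μ = 1 - p := by
    rw [← hind0, integral_indicator_const (1:ℝ) hB, measureReal_def, hX0, smul_eq_mul, mul_one,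
      ENNReal.toReal_ofReal (by linarith [hp.2])]
  have hmul1 : ∫ ω, f1 (X ω) * U (Y ω + 1) ∂μ = p * ∫ ω, U (Y ω + 1) ∂μ := by
    have := hI1.integral_mul_eq_mul_integral ((hf1m.comp hX).aestronglyMeasurable)
      ((hUm.comp (hY.add_const 1)).aestronglyMeasurable)
    rw [← hEf1]
    exact this
  have hmul0 : ∫ ω, f0 (X ω) * U (Y ω) ∂μ = (1-p) * ∫ ω, U (Y ω) ∂μ := by
    have := hI0.integral_mul_eq_mul_integral ((hf0m.comp hX).aestronglyMeasurable)
      ((hUm.comp hY).aestronglyMeasurable)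
    rw [← hEf0]
    exact this
  have int_p1 : Integrable (fun ω => f1 (X ω) * U (Y ω + 1)) μ := by
    refine Integrable.mono' int_dom1
      (((hf1m.comp hX).mul (hUm.comp (hY.add_const 1))).aestronglyMeasurable) ?_
    refine ae_of_all _ fun ω => ?_
    rw [Real.norm_eq_abs, abs_mul]
    have h1 : |f1 (X ω)| ≤ 1 := by
      simp only [hf1def]
      split_ifs <;> norm_num
    calc |f1 (X ω)| * |U (Y ω + 1)| ≤ 1 * |U (Y ω + 1)| :=
          mul_le_mul_of_nonneg_right h1 (abs_nonneg _)
      _ = |U (Y ω + 1)| := one_mul _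
      _ ≤ C * (1 + (Y ω + 1)^2) := hUbd _
  have int_p0 : Integrable (fun ω => f0 (X ω) * U (Y ω)) μ := by
    refine Integrable.mono' int_dom
      (((hf0m.comp hX).mul (hUm.comp hY)).aestronglyMeasurable) ?_
    refine ae_of_all _ fun ω => ?_
    rw [Real.norm_eq_abs, abs_mul]
    have h1 : |f0 (X ω)| ≤ 1 := by
      simp only [hf0def]
      split_ifs <;> norm_num
    calc |f0 (X ω)| * |U (Y ω)| ≤ 1 * |U (Y ω)| :=
          mul_le_mul_of_nonneg_right h1 (abs_nonneg _)
      _ = |U (Y ω)| := one_mul _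
      _ ≤ C * (1 + (Y ω)^2) := hUbd _
  have hzero : p * (∫ ω, U (Y ω + 1) ∂μ) + (1-p) * (∫ ω, U (Y ω) ∂μ) = 0 := by
    rw [← hmul1, ← hmul0, ← integral_add int_p1 int_p0, ← hEUZ]
    exact (integral_congr_ae hsplit).symm
  -- pointwise inequality ⇒ E[Y²] ≥ p
  have intYY1 : Integrable (fun ω => Y ω * (Y ω + 1)) μ := by
    have : (fun ω => Y ω * (Y ω + 1)) = fun ω => (Y ω)^2 + Y ω := by
      funext ω; ring
    rw [this]
    exact hYsq.add hYint
  have hEYsq_ge : p ≤ ∫ ω, (Y ω)^2 ∂μ := by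
    have hW : 0 ≤ ∫ ω, (Y ω * (Y ω + 1)
        - (p * U (Y ω + 1) + (1-p) * U (Y ω))) ∂μ := by
      refine integral_nonneg fun ω => ?_
      have := hUkey (Y ω)
      simp only [Pi.zero_apply]
      linarith
    have hInt2 : Integrable (fun ω => p * U (Y ω + 1) + (1-p) * U (Y ω)) μ :=
      (int_uY1.const_mul p).add (int_uY.const_mul (1-p))
    rw [integral_sub intYY1 hInt2, integral_add (int_uY1.const_mul p)
      (int_uY.const_mul (1-p)), integral_const_mul, integral_const_mul] at hW
    have hsum : ∫ ω, Y ω * (Y ω + 1) ∂μ = (∫ ω, (Y ω)^2 ∂μ) + ∫ ω, Y ω ∂μ := by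
      rw [← integral_add hYsq hYint]
      congr 1
      funext ω; ring
    rw [hsum, hEY] at hW
    linarith [hzero, hW]
  -- conclude
  have hVX : variance X μ = p - p^2 := by
    rw [variance_eq_sub hX2]
    have h1 : μ[X^2] = ∫ ω, (X ω)^2 ∂μ := by
      congr 1
    rw [h1, hEXsq, hEX]
  have hVY : variance Y μ = (∫ ω, (Y ω)^2 ∂μ) - p^2 := by
    rw [variance_eq_sub hY2]
    have h1 : μ[Y^2] = ∫ ω, (Y ω)^2 ∂μ := by
      congr 1
    rw [h1, hEY]
    ring
  rw [hVX, hVY]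
  linarith
end

section
/- Let p ∈ (0,1) and q = 1-p. Let X be a Bernoulli(p) random variable and let Y be independent of X with P(Y = -1) = p and P(Y = 0) = q. Then X + Y is symmetric around zero; i.e., Y is a symmetrizer for X, and Var(Y) = pq = Var(X). Hence the lower bound pq on the variance of a symmetrizer of Bernoulli(p) is attained. -/
open MeasureTheory ProbabilityTheory

open scoped ENNReal

lemma my_variance_congr {Ω : Type*} {m : MeasurableSpace Ω} {X Y : Ω → ℝ} {μ : Measure Ω}
    (h : X =ᵐ[μ] Y) : variance X μ = variance Y μ := by
  have hi : μ[X] = μ[Y] := integral_congr_ae h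
  unfold ProbabilityTheory.variance ProbabilityTheory.evariance
  rw [hi]
  congr 1
  apply lintegral_congr_ae
  filter_upwards [h] with ω hω
  rw [hω]

lemma my_var_indicator {Ω : Type*} [MeasurableSpace Ω] (μ : Measure Ω) [IsProbabilityMeasure μ]
    {s : Set Ω} (hs : MeasurableSet s) :
    variance (s.indicator (fun _ => (1 : ℝ))) μ = (μ s).toReal - (μ s).toReal ^ 2 := by
  have hmem : MemLp (s.indicator fun _ => (1 : ℝ)) 2 μ :=
    memLp_indicator_const 2 hs 1 (Or.inr (measure_ne_top μ s))
  rw [variance_eq_sub hmem]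
  have hsq : (s.indicator fun _ => (1 : ℝ)) ^ 2 = s.indicator fun _ => (1 : ℝ) := by
    ext ω; by_cases h : ω ∈ s <;> simp [Set.indicator_apply, h]
  rw [hsq, integral_indicator_const (1 : ℝ) hs]
  simp [measureReal_def]

lemma my_map_of_three {Ω : Type*} [MeasurableSpace Ω] (μ : Measure Ω)
    (Z : Ω → ℝ) (hZ : Measurable Z) (a b c : ℝ≥0∞)
    (h1 : μ {ω | Z ω = -1} = a) (h0 : μ {ω | Z ω = 0} = b) (h2 : μ {ω | Z ω = 1} = c)
    (htot : ∀ᵐ ω ∂μ, Z ω = -1 ∨ Z ω = 0 ∨ Z ω = 1) :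
    μ.map Z = a • Measure.dirac (-1 : ℝ) + b • Measure.dirac 0 + c • Measure.dirac 1 := by
  classical
  ext s hs
  rw [Measure.map_apply hZ hs]
  have piece : ∀ v : ℝ, μ (Z ⁻¹' s ∩ {ω | Z ω = v})
      = if v ∈ s then μ {ω | Z ω = v} else 0 := by
    intro v
    by_cases hv : v ∈ s
    · simp only [hv, if_true]
      congr 1
      ext ω
      simp only [Set.mem_inter_iff, Set.mem_preimage, Set.mem_setOf_eq]
      exact ⟨fun h => h.2, fun h => ⟨by rw [h]; exact hv, h⟩⟩
    · simp only [hv, if_false]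
      have : Z ⁻¹' s ∩ {ω | Z ω = v} = ∅ := by
        ext ω
        simp only [Set.mem_inter_iff, Set.mem_preimage, Set.mem_setOf_eq,
          Set.mem_empty_iff_false, iff_false, not_and]
        intro h1 h2; exact hv (h2 ▸ h1)
      rw [this, measure_empty]
  have hmv : ∀ v : ℝ, MeasurableSet {ω | Z ω = v} := fun v => hZ (measurableSet_singleton v)
  have hdisj : ∀ u v : ℝ, u ≠ v → Disjoint {ω | Z ω = u} {ω | Z ω = v} := by
    intro u v huv
    rw [Set.disjoint_left]
    intro ω hu hv
    exact huv ((hu.symm.trans hv : u = v))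
  have hcover : Z ⁻¹' s =ᵐ[μ] (((Z ⁻¹' s ∩ {ω | Z ω = -1}) ∪ (Z ⁻¹' s ∩ {ω | Z ω = 0})
      ∪ (Z ⁻¹' s ∩ {ω | Z ω = 1}) : Set Ω)) := by
    filter_upwards [htot] with ω hω
    apply eq_iff_iff.2
    constructor
    · intro h
      rcases hω with h1 | h1 | h1
      · exact Or.inl (Or.inl ⟨h, h1⟩)
      · exact Or.inl (Or.inr ⟨h, h1⟩)
      · exact Or.inr ⟨h, h1⟩
    · rintro ((⟨h, -⟩ | ⟨h, -⟩) | ⟨h, -⟩) <;> exact h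
  rw [measure_congr hcover]
  rw [measure_union (by
      rw [Set.disjoint_left]
      rintro ω (⟨-, h⟩ | ⟨-, h⟩) ⟨-, h'⟩ <;> exact absurd (h.symm.trans h') (by norm_num))
    ((hZ hs).inter (hmv 1)),
    measure_union (by
      rw [Set.disjoint_left]
      rintro ω ⟨-, h⟩ ⟨-, h'⟩
      exact absurd (h.symm.trans h') (by norm_num))
    ((hZ hs).inter (hmv 0))]
  rw [piece (-1), piece 0, piece 1, ← h1, ← h0, ← h2]
  simp only [Measure.add_apply, Measure.smul_apply, smul_eq_mul,
    Measure.dirac_apply' _ hs, Set.indicator_apply, Set.mem_setOf_eq, Pi.one_apply]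
  by_cases ha : (-1 : ℝ) ∈ s <;> by_cases hb : (0 : ℝ) ∈ s <;> by_cases hc : (1 : ℝ) ∈ s <;>
    simp [ha, hb, hc]

/-- **The lower bound `pq` for symmetrizers of Bernoulli(p) is attained.**
If `X` is Bernoulli(`p`) and `Y` is independent of `X` with `P(Y = -1) = p`, `P(Y = 0) = q`
where `q = 1 - p`, then `X + Y` is symmetric around zero (so `Y` is a symmetrizer of `X`)
and `Var(Y) = pq = Var(X)`. -/
theorem bernoulli_minimal_symmetrizer
    {Ω : Type*} [MeasurableSpace Ω] (μ : Measure Ω) [IsProbabilityMeasure μ]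
    (p : ℝ) (hp : p ∈ Set.Ioo (0 : ℝ) 1)
    (X Y : Ω → ℝ) (hX : Measurable X) (hY : Measurable Y)
    (hX1 : μ {ω | X ω = 1} = ENNReal.ofReal p)
    (hX0 : μ {ω | X ω = 0} = ENNReal.ofReal (1 - p))
    (hY1 : μ {ω | Y ω = -1} = ENNReal.ofReal p)
    (hY0 : μ {ω | Y ω = 0} = ENNReal.ofReal (1 - p))
    (hindep : IndepFun X Y μ) :
    μ.map (fun ω => X ω + Y ω) = μ.map (fun ω => -(X ω + Y ω)) ∧
    variance Y μ = p * (1 - p) ∧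
    variance X μ = p * (1 - p) := by
  obtain ⟨hp0, hp1⟩ := hp
  have hq0 : (0 : ℝ) ≤ 1 - p := by linarith
  have hsum1 : ENNReal.ofReal p + ENNReal.ofReal (1 - p) = 1 := by
    rw [← ENNReal.ofReal_add hp0.le hq0]
    norm_num
  -- a.e. two-valuedness
  have ae_two : ∀ (Z : Ω → ℝ), Measurable Z → ∀ u v : ℝ, u ≠ v →
      μ {ω | Z ω = u} + μ {ω | Z ω = v} = 1 → ∀ᵐ ω ∂μ, Z ω = u ∨ Z ω = v := by
    intro Z hZm u v huv hsum
    have hmu : MeasurableSet {ω | Z ω = u} := hZm (measurableSet_singleton u)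
    have hmv : MeasurableSet {ω | Z ω = v} := hZm (measurableSet_singleton v)
    have hdisj : Disjoint {ω | Z ω = u} {ω | Z ω = v} := by
      rw [Set.disjoint_left]
      intro ω h1 h2
      exact huv ((h1 : Z ω = u).symm.trans h2)
    have hu : μ ({ω | Z ω = u} ∪ {ω | Z ω = v}) = 1 := by
      rw [measure_union hdisj hmv, hsum]
    have hcz : μ ({ω | Z ω = u} ∪ {ω | Z ω = v})ᶜ = 0 := by
      rw [measure_compl (hmu.union hmv) (measure_ne_top μ _), hu, measure_univ, tsub_self]
    rw [ae_iff]
    have : {ω | ¬(Z ω = u ∨ Z ω = v)} = ({ω | Z ω = u} ∪ {ω | Z ω = v})ᶜ := by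
      ext ω; simp [not_or]
    rw [this]; exact hcz
  have hXae : ∀ᵐ ω ∂μ, X ω = 1 ∨ X ω = 0 :=
    ae_two X hX 1 0 one_ne_zero (by rw [hX1, hX0, hsum1])
  have hYae : ∀ᵐ ω ∂μ, Y ω = -1 ∨ Y ω = 0 :=
    ae_two Y hY (-1) 0 (by norm_num) (by rw [hY1, hY0, hsum1])
  -- cells via independence
  have cell : ∀ u v : ℝ, μ ({ω | X ω = u} ∩ {ω | Y ω = v})
      = μ {ω | X ω = u} * μ {ω | Y ω = v} := fun u v =>
    hindep.measure_inter_preimage_eq_mul {u} {v} (measurableSet_singleton u)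
      (measurableSet_singleton v)
  -- distribution of Z = X + Y
  set pe := ENNReal.ofReal p with hpe
  set qe := ENNReal.ofReal (1 - p) with hqe
  have hmeq : ∀ u v : ℝ, (∀ᵐ ω ∂μ, (X ω + Y ω = u + v ↔ X ω = u ∧ Y ω = v)) →
      μ {ω | X ω + Y ω = u + v} = μ {ω | X ω = u} * μ {ω | Y ω = v} := by
    intro u v hae
    rw [← cell u v]
    apply measure_congr
    filter_upwards [hae] with ω h
    apply eq_iff_iff.2
    exact h
  have hZm1 : μ {ω | X ω + Y ω = -1} = qe * pe := by
    have := hmeq 0 (-1) (by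
      filter_upwards [hXae, hYae] with ω h1 h2
      constructor
      · intro h
        rcases h1 with h1 | h1 <;> rcases h2 with h2 | h2 <;>
          exact ⟨by linarith, by linarith⟩
      · rintro ⟨ha, hb⟩; rw [ha, hb])
    norm_num at this
    rw [this, hX0, hY1]
  have hZ1 : μ {ω | X ω + Y ω = 1} = pe * qe := by
    have := hmeq 1 0 (by
      filter_upwards [hXae, hYae] with ω h1 h2
      constructor
      · intro h
        rcases h1 with h1 | h1 <;> rcases h2 with h2 | h2 <;>
          exact ⟨by linarith, by linarith⟩
      · rintro ⟨ha, hb⟩; rw [ha, hb])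
    norm_num at this
    rw [this, hX1, hY0]
  have hZ0 : μ {ω | X ω + Y ω = 0} = pe * pe + qe * qe := by
    have hsets : ({ω | X ω + Y ω = 0} : Set Ω) =ᵐ[μ]
        ((({ω | X ω = 1} ∩ {ω | Y ω = -1}) ∪ ({ω | X ω = 0} ∩ {ω | Y ω = 0})) : Set Ω) := by
      filter_upwards [hXae, hYae] with ω h1 h2
      apply eq_iff_iff.2
      constructor
      · intro h
        have h' : X ω + Y ω = 0 := h
        rcases h1 with h1 | h1 <;> rcases h2 with h2 | h2
        · exact Or.inl ⟨h1, h2⟩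
        · exact Or.inl ⟨h1, by linarith⟩
        · exact Or.inr ⟨h1, by linarith⟩
        · exact Or.inr ⟨h1, h2⟩
      · rintro (⟨ha, hb⟩ | ⟨ha, hb⟩) <;>
          · have ha' : X ω = _ := ha
            have hb' : Y ω = _ := hb
            show X ω + Y ω = 0
            rw [ha', hb']
            norm_num
    rw [measure_congr hsets, measure_union ?_ ?_, cell, cell, hX1, hX0, hY1, hY0]
    · rw [Set.disjoint_left]
      rintro ω ⟨ha, -⟩ ⟨hb, -⟩
      exact one_ne_zero ((ha : X ω = 1).symm.trans hb)
    · exact (hX (measurableSet_singleton 0)).inter (hY (measurableSet_singleton 0))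
  -- distribution of W = -(X+Y)
  have hWset : ∀ v : ℝ, ({ω | -(X ω + Y ω) = v} : Set Ω) = {ω | X ω + Y ω = -v} := by
    intro v; ext ω; simp only [Set.mem_setOf_eq, neg_eq_iff_eq_neg]
  have hWm1 : μ {ω | -(X ω + Y ω) = -1} = pe * qe := by
    rw [hWset]; norm_num; rw [← hZ1]
  have hW0 : μ {ω | -(X ω + Y ω) = 0} = pe * pe + qe * qe := by
    rw [hWset]; norm_num; rw [← hZ0]
  have hW1 : μ {ω | -(X ω + Y ω) = 1} = qe * pe := by
    rw [hWset]; exact hZm1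
  have htotZ : ∀ᵐ ω ∂μ, X ω + Y ω = -1 ∨ X ω + Y ω = 0 ∨ X ω + Y ω = 1 := by
    filter_upwards [hXae, hYae] with ω h1 h2
    rcases h1 with h1 | h1 <;> rcases h2 with h2 | h2 <;> rw [h1, h2] <;> norm_num
  have htotW : ∀ᵐ ω ∂μ, -(X ω + Y ω) = -1 ∨ -(X ω + Y ω) = 0 ∨ -(X ω + Y ω) = 1 := by
    filter_upwards [htotZ] with ω h
    rcases h with h | h | h <;> rw [h] <;> norm_num
  have hZmeas : Measurable fun ω => X ω + Y ω := hX.add hY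
  refine ⟨?_, ?_, ?_⟩
  · rw [my_map_of_three μ _ hZmeas (qe * pe) (pe * pe + qe * qe) (pe * qe) hZm1 hZ0 hZ1 htotZ,
      my_map_of_three μ (fun ω => -(X ω + Y ω)) hZmeas.neg (pe * qe) (pe * pe + qe * qe) (qe * pe) hWm1 hW0 hW1 htotW,
      mul_comm qe pe]
  · have hYind : Y =ᵐ[μ] fun ω => (-1 : ℝ) * ({ω | Y ω = -1}.indicator (fun _ => (1 : ℝ)) ω) := by
      filter_upwards [hYae] with ω h
      rcases h with h | h <;> simp [Set.indicator_apply, h]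
    rw [my_variance_congr hYind, variance_const_mul,
      my_var_indicator μ (s := {ω | Y ω = -1}) (hY (measurableSet_singleton (-1))), hY1,
      ENNReal.toReal_ofReal hp0.le]
    ring
  · have hXind : X =ᵐ[μ] ({ω | X ω = 1}.indicator (fun _ => (1 : ℝ))) := by
      filter_upwards [hXae] with ω h
      rcases h with h | h <;> simp [Set.indicator_apply, h]
    rw [my_variance_congr hXind,
      my_var_indicator μ (s := {ω | X ω = 1}) (hX (measurableSet_singleton 1)), hX1,
      ENNReal.toReal_ofReal hp0.le]
    ring
end
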